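/- The Fernandez bound is valid: for any m and weighted DAG, the optimal makespan on m processors is at least t_cp + q, where q = max over subintervals θ ⊆ [0,t_cp) of ⌈R(θ)/m − |θ|⌉ (with R computed using deadline T = t_cp). -/

import Mathlib

open MeasureTheory

lemma wf_of_acyclic {V : Type*} [Finite V] (E : V → V → Prop)
    (hacyc : ∀ v, ¬ Relation.TransGen E v v) : WellFounded E := by
  have h1 : IsIrrefl V (Relation.TransGen E) := ⟨hacyc⟩
  have h2 : WellFounded (Relation.TransGen E) :=
    Finite.wellFounded_of_trans_of_irrefl _
  exact Subrelation.wf (fun h => Relation.TransGen.single h) h2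

lemma mnEnd_le_end {V : Type*} [Fintype V] [DecidableEq V]
    (E : V → V → Prop) [DecidableRel E]
    (hacyc : ∀ v, ¬ Relation.TransGen E v v) (c : V → ℝ) (mnEnd : V → ℝ)
    (hrecE : ∀ u, mnEnd u = c u +
      (insert (0 : ℝ) ((Finset.univ.filter fun v => E v u).image mnEnd)).max'
        (Finset.insert_nonempty _ _))
    (τ : V → ℝ) (h0 : ∀ v, 0 ≤ τ v)
    (hprec : ∀ u v, E u v → τ u + c u ≤ τ v) : ∀ u, mnEnd u ≤ τ u + c u := by
  intro u
  induction u using (wf_of_acyclic E hacyc).induction with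
  | _ u ih =>
    rw [hrecE u]
    have h : (insert (0:ℝ) ((Finset.univ.filter fun v => E v u).image mnEnd)).max'
        (Finset.insert_nonempty _ _) ≤ τ u := by
      apply Finset.max'_le
      intro y hy
      rcases Finset.mem_insert.mp hy with h | h
      · exact h ▸ h0 u
      · obtain ⟨v, hv, rfl⟩ := Finset.mem_image.mp h
        have hvE : E v u := (Finset.mem_filter.mp hv).2
        exact (ih v hvE).trans (hprec v u hvE)
    linarith

lemma start_le_mxStart {V : Type*} [Fintype V] [DecidableEq V]
    (E : V → V → Prop) [DecidableRel E]
    (hacyc : ∀ v, ¬ Relation.TransGen E v v) (c : V → ℝ) (tcp : ℝ) (mxStart : V → ℝ)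
    (hrecS : ∀ u, mxStart u =
      (insert (tcp - c u)
        ((Finset.univ.filter fun v => E u v).image (fun v => mxStart v - c u))).min'
        (Finset.insert_nonempty _ _))
    (τ : V → ℝ) (M : ℝ) (hM : ∀ v, τ v + c v ≤ M)
    (hprec : ∀ u v, E u v → τ u + c u ≤ τ v) : ∀ u, τ u ≤ mxStart u + (M - tcp) := by
  have hwf : WellFounded (fun a b => E b a) := by
    apply wf_of_acyclic
    intro v hv
    exact hacyc v ((Relation.transGen_swap).mpr hv)
  intro u
  induction u using hwf.induction with
  | _ u ih =>
    rw [hrecS u]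
    have h : τ u - (M - tcp) ≤ (insert (tcp - c u)
        ((Finset.univ.filter fun v => E u v).image (fun v => mxStart v - c u))).min'
        (Finset.insert_nonempty _ _) := by
      apply Finset.le_min'
      intro y hy
      rcases Finset.mem_insert.mp hy with h | h
      · have := hM u; rw [h]; linarith
      · obtain ⟨v, hv, rfl⟩ := Finset.mem_image.mp h
        have hvE : E u v := (Finset.mem_filter.mp hv).2
        have h1 := hprec u v hvE
        have h2 := ih v hvE
        linarith
    linarith

lemma chain_sum_le' {V : Type*} (E : V → V → Prop) (c τ : V → ℝ)
    (hprec : ∀ u v, E u v → τ u + c u ≤ τ v) :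
    ∀ (l : List V) (a : V), List.Chain E a l →
      τ a + c a + ((l.map c).sum) ≤
        τ ((a :: l).getLast (List.cons_ne_nil a l)) + c ((a :: l).getLast (List.cons_ne_nil a l)) := by
  intro l
  induction l with
  | nil => intro a _; simp
  | cons b t ih =>
    intro a hchain
    replace hchain : E a b ∧ List.Chain E b t := List.isChain_cons_cons.mp hchain
    obtain ⟨hab, hbt⟩ := hchain
    have h1 := hprec a b hab
    have h2 := ih b hbt
    have hg : (a :: b :: t).getLast (List.cons_ne_nil _ _) =
        (b :: t).getLast (List.cons_ne_nil _ _) := by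
      rw [List.getLast_cons]
    rw [hg]
    simp only [List.map_cons, List.sum_cons] at h2 ⊢
    linarith

lemma sum_nat_of_nat {V : Type*} (c : V → ℝ) (hint : ∀ v, ∃ k : ℕ, c v = (k : ℝ)) :
    ∀ l : List V, ∃ n : ℕ, (l.map c).sum = (n : ℝ) := by
  intro l
  induction l with
  | nil => exact ⟨0, by simp⟩
  | cons a t ih =>
    obtain ⟨n, hn⟩ := ih
    obtain ⟨kk, hkk⟩ := hint a
    exact ⟨kk + n, by simp [hkk, hn]⟩

lemma pointwise_le (mnE mxS cu ti tj δ su : ℝ)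
    (h1 : mnE ≤ su + cu) (h2 : su ≤ mxS + δ) (h3 : 0 ≤ δ) :
    max 0 (min (min (mnE - ti) cu) (min (tj - mxS) (tj - ti))) ≤
      max 0 (min (su + cu) (tj + δ) - max su ti) := by
  apply max_le (le_max_left _ _)
  refine le_trans ?_ (le_max_right _ _)
  simp only [min_def, max_def]
  split_ifs <;> linarith

lemma sum_len_le {V : Type*} [DecidableEq V] (s : Finset V) (a b : ℝ) (st en : V → ℝ)
    (hord : ∀ u ∈ s, ∀ v ∈ s, u ≠ v → en u ≤ st v ∨ en v ≤ st u)
    (hab : a ≤ b) :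
    ∑ u ∈ s, max 0 (min (en u) b - max (st u) a) ≤ b - a := by
  set S : V → Set ℝ := fun u => Set.Ico (max (st u) a) (min (en u) b) with hS
  have hdisj : (↑s : Set V).PairwiseDisjoint S := by
    intro u hu v hv huv
    simp only [hS, Function.onFun, Set.Ico_disjoint_Ico]
    rcases hord u hu v hv huv with h | h
    · calc min (min (en u) b) (min (en v) b) ≤ en u := (min_le_left _ _).trans (min_le_left _ _)
        _ ≤ st v := h
        _ ≤ max (max (st u) a) (max (st v) a) := le_max_of_le_right (le_max_left _ _)
    · calc min (min (en u) b) (min (en v) b) ≤ en v := (min_le_right _ _).trans (min_le_left _ _)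
        _ ≤ st u := h
        _ ≤ max (max (st u) a) (max (st v) a) := le_max_of_le_left (le_max_left _ _)
  have key : ∑ u ∈ s, volume (S u) ≤ volume (Set.Ico a b) := by
    rw [← measure_biUnion_finset hdisj (fun u _ => measurableSet_Ico)]
    refine measure_mono ?_
    intro x hx
    simp only [Set.mem_iUnion, hS, Set.mem_Ico] at hx ⊢
    obtain ⟨u, hu, h1, h2⟩ := hx
    exact ⟨(le_max_right _ _).trans h1, h2.trans_le (min_le_right _ _)⟩
  have hvol : ∀ u, volume (S u) = ENNReal.ofReal (max 0 (min (en u) b - max (st u) a)) := by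
    intro u
    rw [hS, Real.volume_Ico]
    rcases le_total (min (en u) b - max (st u) a) 0 with h | h
    · rw [max_eq_left h, ENNReal.ofReal_of_nonpos h, ENNReal.ofReal_zero]
    · rw [max_eq_right h]
  rw [Real.volume_Ico] at key
  simp only [hvol] at key
  rw [← ENNReal.ofReal_sum_of_nonneg (fun u _ => le_max_left _ _)] at key
  exact (ENNReal.ofReal_le_ofReal_iff (by linarith)).mp key

/-- A feasible schedule of the weighted graph `(E, c)` on `m` identical processors. -/
def Feasible {V : Type*} (E : V → V → Prop) (c : V → ℝ) {m : ℕ}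
    (τ : V → ℝ) (proc : V → Fin m) : Prop :=
  (∀ v, 0 ≤ τ v) ∧
  (∀ u v, u ≠ v → proc u = proc v → τ u + c u ≤ τ v ∨ τ v + c v ≤ τ u) ∧
  (∀ u v, E u v → τ u + c u ≤ τ v)

/-- The Fernandez bound is valid: the optimal makespan on `m` processors is at least
`tcp + q` where `q = max over θ ⊆ [0, tcp) of ⌈R(θ)/m - |θ|⌉` (here stated for each
subinterval `θ = [ti, tj)`, with `R` computed from the `mnEnd`/`mxStart` windows for the
deadline `T = tcp`). -/
theorem stmt_12 {V : Type*} [Fintype V] [Nonempty V] [DecidableEq V]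
    (E : V → V → Prop) [DecidableRel E]
    (hacyc : ∀ v, ¬ Relation.TransGen E v v)
    (c : V → ℝ) (hpos : ∀ v, 0 < c v) (hint : ∀ v, ∃ k : ℕ, c v = (k : ℝ))
    (tcp : ℝ)
    (htcp : IsGreatest {x : ℝ | ∃ l : List V, l.Chain' E ∧ (l.map c).sum = x} tcp)
    (mnEnd mxStart : V → ℝ)
    (hrecE : ∀ u, mnEnd u = c u +
      (insert (0 : ℝ) ((Finset.univ.filter fun v => E v u).image mnEnd)).max'
        (Finset.insert_nonempty _ _))
    (hrecS : ∀ u, mxStart u =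
      (insert (tcp - c u)
        ((Finset.univ.filter fun v => E u v).image (fun v => mxStart v - c u))).min'
        (Finset.insert_nonempty _ _))
    (m : ℕ) (hm : 0 < m)
    (ti tj : ℝ) (h0 : 0 ≤ ti) (hij : ti < tj) (hjT : tj ≤ tcp) :
    ∀ (τ : V → ℝ) (proc : V → Fin m), Feasible E c τ proc →
      ∃ v, tcp +
        (⌈(∑ u, max 0 (min (min (mnEnd u - ti) (c u)) (min (tj - mxStart u) (tj - ti))))
            / (m : ℝ) - (tj - ti)⌉ : ℤ) ≤ τ v + c v := by
  intro τ proc hfeas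
  obtain ⟨hτ0, hdisj, hprec⟩ := hfeas
  choose k hk using hint
  -- the floored schedule
  set σ : V → ℝ := fun v => ((⌊τ v⌋ : ℤ) : ℝ) with hσdef
  have hσ0 : ∀ v, 0 ≤ σ v := by
    intro v
    simp only [hσdef]
    exact_mod_cast Int.le_floor.mpr (by exact_mod_cast hτ0 v)
  have hle : ∀ u v : V, τ u + c u ≤ τ v → σ u + c u ≤ σ v := by
    intro u v h
    have h1 : (⌊τ u⌋ : ℤ) + (k u : ℤ) ≤ ⌊τ v⌋ := by
      have : ⌊τ u + (k u : ℝ)⌋ ≤ ⌊τ v⌋ := Int.floor_le_floor (by rw [← hk u]; exact h)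
      rwa [Int.floor_add_natCast] at this
    have h2 : ((⌊τ u⌋ : ℤ) : ℝ) + ((k u : ℤ) : ℝ) ≤ ((⌊τ v⌋ : ℤ) : ℝ) := by exact_mod_cast h1
    simp only [hσdef]
    rw [hk u]
    push_cast at h2 ⊢
    linarith
  have hσprec : ∀ u v, E u v → σ u + c u ≤ σ v := fun u v h => hle u v (hprec u v h)
  -- the makespan of the floored schedule
  obtain ⟨v0, -, hv0⟩ := Finset.exists_max_image Finset.univ (fun v => σ v + c v)
    ⟨Classical.arbitrary V, Finset.mem_univ _⟩
  have hM : ∀ v, σ v + c v ≤ σ v0 + c v0 := fun v => hv0 v (Finset.mem_univ v)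
  set M : ℝ := σ v0 + c v0 with hMdef
  -- tcp ≤ M
  have htcpM : tcp ≤ M := by
    obtain ⟨l, hlchain, hlsum⟩ := htcp.1
    cases l with
    | nil =>
      simp only [List.map_nil, List.sum_nil] at hlsum
      have := hσ0 v0
      have := (hpos v0).le
      linarith
    | cons a t =>
      have hch : List.Chain E a t := hlchain
      have h1 := chain_sum_le' E c σ hσprec t a hch
      have h2 := hM ((a :: t).getLast (List.cons_ne_nil a t))
      have h3 := hσ0 a
      simp only [List.map_cons, List.sum_cons] at hlsum
      linarith
  have hδ0 : 0 ≤ M - tcp := by linarith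
  -- tcp is a natural number
  obtain ⟨n, hn⟩ : ∃ n : ℕ, tcp = (n : ℝ) := by
    obtain ⟨l, -, hs⟩ := htcp.1
    obtain ⟨n, h⟩ := sum_nat_of_nat c (fun v => ⟨k v, hk v⟩) l
    exact ⟨n, by rw [← hs, h]⟩
  -- window bounds for the floored schedule
  have hmn : ∀ u, mnEnd u ≤ σ u + c u :=
    mnEnd_le_end E hacyc c mnEnd hrecE σ hσ0 hσprec
  have hmx : ∀ u, σ u ≤ mxStart u + (M - tcp) :=
    start_le_mxStart E hacyc c tcp mxStart hrecS σ M hM hσprec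
  -- pointwise bound
  set len : V → ℝ := fun u => max 0 (min (σ u + c u) (tj + (M - tcp)) - max (σ u) ti)
    with hlen
  have step1 : ∀ u, max 0 (min (min (mnEnd u - ti) (c u)) (min (tj - mxStart u) (tj - ti)))
      ≤ len u := fun u => pointwise_le (mnEnd u) (mxStart u) (c u) ti tj (M - tcp) (σ u)
        (hmn u) (hmx u) hδ0
  -- capacity bound
  have step2 : ∀ p : Fin m,
      ∑ u ∈ Finset.univ.filter (fun u => proc u = p), len u ≤ (tj + (M - tcp)) - ti := by
    intro p
    apply sum_len_le _ ti (tj + (M - tcp)) σ (fun u => σ u + c u) _ (by linarith)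
    intro u hu v hv huv
    have hpu : proc u = p := (Finset.mem_filter.mp hu).2
    have hpv : proc v = p := (Finset.mem_filter.mp hv).2
    rcases hdisj u v huv (hpu.trans hpv.symm) with h | h
    · exact Or.inl (hle u v h)
    · exact Or.inr (hle v u h)
  have step3 : (∑ u, max 0 (min (min (mnEnd u - ti) (c u)) (min (tj - mxStart u) (tj - ti))))
      ≤ (m : ℝ) * ((tj + (M - tcp)) - ti) := by
    calc (∑ u, max 0 (min (min (mnEnd u - ti) (c u)) (min (tj - mxStart u) (tj - ti))))
        ≤ ∑ u, len u := Finset.sum_le_sum (fun u _ => step1 u)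
      _ = ∑ p : Fin m, ∑ u ∈ Finset.univ.filter (fun u => proc u = p), len u :=
          (Finset.sum_fiberwise _ _ _).symm
      _ ≤ ∑ _p : Fin m, ((tj + (M - tcp)) - ti) :=
          Finset.sum_le_sum (fun p _ => step2 p)
      _ = (m : ℝ) * ((tj + (M - tcp)) - ti) := by
          rw [Finset.sum_const, Finset.card_univ, Fintype.card_fin, nsmul_eq_mul]
  -- conclude
  set R : ℝ := ∑ u, max 0 (min (min (mnEnd u - ti) (c u)) (min (tj - mxStart u) (tj - ti)))
    with hR
  have hmpos : (0 : ℝ) < (m : ℝ) := by exact_mod_cast hm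
  have hdiv : R / (m : ℝ) - (tj - ti) ≤ M - tcp := by
    rw [sub_le_iff_le_add, div_le_iff₀ hmpos]
    nlinarith [step3]
  have hz : M - tcp = (((⌊τ v0⌋ : ℤ) + (k v0 : ℤ) - (n : ℤ) : ℤ) : ℝ) := by
    simp only [hMdef, hσdef]
    rw [hk v0, hn]
    push_cast
    ring
  have hceil : (⌈R / (m : ℝ) - (tj - ti)⌉ : ℝ) ≤ M - tcp := by
    rw [hz]
    exact_mod_cast Int.ceil_le.mpr (by rw [← hz]; exact hdiv)
  refine ⟨v0, ?_⟩
  have hfloor : σ v0 ≤ τ v0 := Int.floor_le _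
  have : M ≤ τ v0 + c v0 := by simp only [hMdef]; linarith
  linarith
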